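/- Let M₁ be a linear map and M₂ a nonzero scalar multiple of an orthogonal transformation (so that ‖M₂v‖ = ‖M₂‖·‖v‖ for all v, where ‖M₂‖ denotes the scaling factor). For x in the open unit ball with x ≠ 0 and M₁x ≠ 0, the composition of hyperbolic matrix-vector multiplications satisfies M₂^⊗(M₁^⊗(x)) = tanh((‖M₂‖·‖M₁x‖/‖x‖)·artanh(‖x‖)) · (M₂M₁x)/(‖M₂‖·‖M₁x‖) = (M₂M₁)^⊗(x). -/

import Mathlib

open scoped Classical

noncomputable def artanh (t : ℝ) : ℝ := Real.log ((1 + t) / (1 - t)) / 2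

/-- Hyperbolic matrix-vector multiplication on the Poincaré ball, with `M^⊗(x) = 0`
whenever `M x = 0` (in particular `M^⊗(0) = 0`). -/
noncomputable def hypMul {n : ℕ} (M : EuclideanSpace ℝ (Fin n) →ₗ[ℝ] EuclideanSpace ℝ (Fin n))
    (x : EuclideanSpace ℝ (Fin n)) : EuclideanSpace ℝ (Fin n) :=
  if M x = 0 then 0 else
    Real.tanh ((‖M x‖ / ‖x‖) * artanh ‖x‖) • (‖M x‖⁻¹ • M x)

lemma artanh_tanh (z : ℝ) : artanh (Real.tanh z) = z := by
  unfold artanh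
  rw [Real.tanh_eq_sinh_div_cosh, Real.sinh_eq, Real.cosh_eq]
  have hS : (0:ℝ) < Real.exp z + Real.exp (-z) := by positivity
  have he : (0:ℝ) < Real.exp (-z) := Real.exp_pos _
  have h1 : 1 + (Real.exp z - Real.exp (-z)) / 2 / ((Real.exp z + Real.exp (-z)) / 2)
      = 2 * Real.exp z / (Real.exp z + Real.exp (-z)) := by field_simp; ring
  have h2 : 1 - (Real.exp z - Real.exp (-z)) / 2 / ((Real.exp z + Real.exp (-z)) / 2)
      = 2 * Real.exp (-z) / (Real.exp z + Real.exp (-z)) := by field_simp; ring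
  rw [h1, h2]
  have h3 : 2 * Real.exp z / (Real.exp z + Real.exp (-z))
      / (2 * Real.exp (-z) / (Real.exp z + Real.exp (-z))) = Real.exp (2 * z) := by
    have key : Real.exp (2 * z) = Real.exp z * Real.exp z := by
      rw [two_mul, Real.exp_add]
    rw [key, Real.exp_neg]
    field_simp
  rw [h3, Real.log_exp]; ring

lemma tanh_pos {z : ℝ} (hz : 0 < z) : 0 < Real.tanh z := by
  rw [Real.tanh_eq_sinh_div_cosh]
  exact div_pos (Real.sinh_pos_iff.mpr hz) (Real.cosh_pos z)

theorem stmt1 {n : ℕ}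
    (M₁ M₂ : EuclideanSpace ℝ (Fin n) →ₗ[ℝ] EuclideanSpace ℝ (Fin n)) (c : ℝ) (hc : 0 < c)
    (hconf : ∀ v, ‖M₂ v‖ = c * ‖v‖)
    (x : EuclideanSpace ℝ (Fin n)) (hx0 : x ≠ 0) (hx1 : ‖x‖ < 1) (hM₁x : M₁ x ≠ 0) :
    hypMul M₂ (hypMul M₁ x)
      = Real.tanh ((c * ‖M₁ x‖ / ‖x‖) * artanh ‖x‖) • ((c * ‖M₁ x‖)⁻¹ • M₂ (M₁ x)) ∧
    hypMul M₂ (hypMul M₁ x) = hypMul (M₂ ∘ₗ M₁) x := by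
  have hx : 0 < ‖x‖ := norm_pos_iff.mpr hx0
  have hM : 0 < ‖M₁ x‖ := norm_pos_iff.mpr hM₁x
  have har : 0 < artanh ‖x‖ := by
    unfold artanh
    have : (1:ℝ) < (1 + ‖x‖) / (1 - ‖x‖) := by
      rw [lt_div_iff₀ (by linarith)]; linarith
    have := Real.log_pos this
    linarith
  set a : ℝ := (‖M₁ x‖ / ‖x‖) * artanh ‖x‖ with ha
  have hapos : 0 < a := mul_pos (div_pos hM hx) har
  set t : ℝ := Real.tanh a with ht
  have htpos : 0 < t := tanh_pos hapos
  have hy : hypMul M₁ x = t • (‖M₁ x‖⁻¹ • M₁ x) := by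
    rw [hypMul, if_neg hM₁x]
  have hny : ‖hypMul M₁ x‖ = t := by
    rw [hy, norm_smul, norm_smul, norm_inv, norm_norm,
      inv_mul_cancel₀ hM.ne', mul_one, Real.norm_eq_abs, abs_of_pos htpos]
  have hMy : M₂ (hypMul M₁ x) = (t * ‖M₁ x‖⁻¹) • M₂ (M₁ x) := by
    rw [hy, map_smul, map_smul, smul_smul]
  have hMM : 0 < ‖M₂ (M₁ x)‖ := by rw [hconf]; positivity
  have hMy0 : M₂ (hypMul M₁ x) ≠ 0 := by
    rw [hMy]
    exact smul_ne_zero (by positivity) (norm_pos_iff.mp hMM)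
  have hnMy : ‖M₂ (hypMul M₁ x)‖ = c * t := by rw [hconf, hny]
  have h1 : hypMul M₂ (hypMul M₁ x)
      = Real.tanh ((c * ‖M₁ x‖ / ‖x‖) * artanh ‖x‖) • ((c * ‖M₁ x‖)⁻¹ • M₂ (M₁ x)) := by
    rw [hypMul, if_neg hMy0, hnMy, hny]
    have harg : c * t / t * artanh t = c * ‖M₁ x‖ / ‖x‖ * artanh ‖x‖ := by
      rw [ht, artanh_tanh, mul_div_assoc, div_self htpos.ne', mul_one, ha]
      ring
    rw [harg, hMy, smul_smul, smul_smul, smul_smul]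
    congr 1
    field_simp
  refine ⟨h1, ?_⟩
  rw [h1, hypMul]
  have hcomp : (M₂ ∘ₗ M₁) x = M₂ (M₁ x) := rfl
  rw [if_neg (by rw [hcomp]; exact norm_pos_iff.mp hMM), hcomp, hconf]
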